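/- Let f(z) = (r(R−r))/((1−r²)\bar z) + ((1−rR)z)/(1−r²) with 0 < r < 1 and r < R < 1. Then f is a diffeomorphism of the closed annulus \overline{A(r,1)} onto \overline{A(R,1)} (in particular its Jacobian J(z,f) = |f_z|² − |f_{\bar z}|² is positive on \overline{A(r,1)}) if and only if R < 2r/(1+r²). -/

import Mathlib

/-- The Wirtinger derivative `f_z` of `f : ℂ → ℂ`, via the real Fréchet derivative. -/
noncomputable def wirtingerZ (f : ℂ → ℂ) (z : ℂ) : ℂ :=
  (fderiv ℝ f z 1 - Complex.I * fderiv ℝ f z Complex.I) / 2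

/-- The Wirtinger derivative `f_{z̄}` of `f : ℂ → ℂ`. -/
noncomputable def wirtingerZbar (f : ℂ → ℂ) (z : ℂ) : ℂ :=
  (fderiv ℝ f z 1 + Complex.I * fderiv ℝ f z Complex.I) / 2

open Complex in
lemma wirt_key (A B : ℂ) {z : ℂ} (hz : z ≠ 0) (f : ℂ → ℂ)
    (hf : ∀ w : ℂ, w ≠ 0 → f w = A * ((starRingEnd ℂ) w)⁻¹ + B * w) :
    wirtingerZ f z = B ∧ wirtingerZbar f z = -(A * ((((starRingEnd ℂ) z) ^ 2)⁻¹)) := by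
  have hcz : (starRingEnd ℂ) z ≠ 0 := by simpa using hz
  have hconj : HasFDerivAt (fun w : ℂ => (starRingEnd ℂ) w)
      (Complex.conjCLE.toContinuousLinearMap) z := by
    exact Complex.conjCLE.toContinuousLinearMap.hasFDerivAt (x := z)
  have hinv : HasFDerivAt (fun w : ℂ => ((starRingEnd ℂ) w)⁻¹)
      ((((1 : ℂ →L[ℂ] ℂ).smulRight (-(((starRingEnd ℂ) z) ^ 2)⁻¹)).restrictScalars ℝ) ∘L
        Complex.conjCLE.toContinuousLinearMap) z :=
    (((hasDerivAt_inv hcz).hasFDerivAt).restrictScalars ℝ).comp z hconj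
  have hF : HasFDerivAt f
      (A • ((((1 : ℂ →L[ℂ] ℂ).smulRight (-(((starRingEnd ℂ) z) ^ 2)⁻¹)).restrictScalars ℝ ∘L
        Complex.conjCLE.toContinuousLinearMap)) + B • (ContinuousLinearMap.id ℝ ℂ)) z := by
    apply HasFDerivAt.congr_of_eventuallyEq
      ((hinv.const_mul A).add ((hasFDerivAt_id z).const_mul B))
    filter_upwards [isOpen_compl_singleton.mem_nhds hz] with w hw
    exact hf w hw
  have hD := hF.fderiv
  have hone : fderiv ℝ f z 1 = A * (-(((starRingEnd ℂ) z) ^ 2)⁻¹) + B := by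
    rw [hD]; simp [Complex.conjCLE_apply]
  have hI : fderiv ℝ f z Complex.I =
      A * (-(((starRingEnd ℂ) z) ^ 2)⁻¹ * (-Complex.I)) + B * Complex.I := by
    rw [hD]; simp [Complex.conjCLE_apply]; exact Or.inl (mul_comm _ _)
  constructor
  · rw [wirtingerZ, hone, hI]
    ring_nf
    rw [Complex.I_sq]
    ring
  · rw [wirtingerZbar, hone, hI]
    ring_nf
    rw [Complex.I_sq]
    ring

theorem stmt_12 (r R : ℝ) (hr0 : 0 < r) (hr1 : r < 1) (hrR : r < R) (hR1 : R < 1)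
    (f : ℂ → ℂ)
    (hf : ∀ z : ℂ, z ≠ 0 →
      f z = ((r : ℂ) * ((R : ℂ) - r)) / ((1 - (r : ℂ) ^ 2) * (starRingEnd ℂ) z) +
        ((1 - (r : ℂ) * R) * z) / (1 - (r : ℂ) ^ 2)) :
    (Set.BijOn f {z : ℂ | r ≤ ‖z‖ ∧ ‖z‖ ≤ 1} {w : ℂ | R ≤ ‖w‖ ∧ ‖w‖ ≤ 1} ∧
      ∀ z : ℂ, r ≤ ‖z‖ → ‖z‖ ≤ 1 →
        0 < ‖wirtingerZ f z‖ ^ 2 - ‖wirtingerZbar f z‖ ^ 2) ↔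
    R < 2 * r / (1 + r ^ 2) := by
  have h1r2 : (0:ℝ) < 1 - r^2 := by nlinarith
  have hR0 : 0 < R := lt_trans hr0 hrR
  set a : ℝ := r*(R-r)/(1-r^2) with ha_def
  set b : ℝ := (1-r*R)/(1-r^2) with hb_def
  have ha : 0 < a := by rw [ha_def]; apply div_pos (by nlinarith) h1r2
  have hb : 0 < b := by rw [hb_def]; apply div_pos (by nlinarith) h1r2
  have h1r2C : (1 - (r:ℂ)^2) ≠ 0 := by
    have : ((1 - r^2 : ℝ) : ℂ) ≠ 0 := Complex.ofReal_ne_zero.mpr (ne_of_gt h1r2)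
    push_cast at this; exact this
  have hfeq : ∀ w : ℂ, w ≠ 0 →
      f w = ((a:ℝ):ℂ) * ((starRingEnd ℂ) w)⁻¹ + ((b:ℝ):ℂ) * w := by
    intro w hw
    have hcw : (starRingEnd ℂ) w ≠ 0 := by simpa using hw
    rw [hf w hw, ha_def, hb_def]
    push_cast
    field_simp
  have hW : ∀ z : ℂ, z ≠ 0 →
      ‖wirtingerZ f z‖ = b ∧ ‖wirtingerZbar f z‖ = a / ‖z‖^2 := by
    intro z hz
    obtain ⟨h1, h2⟩ := wirt_key ((a:ℝ):ℂ) ((b:ℝ):ℂ) hz f hfeq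
    constructor
    · rw [h1, Complex.norm_real, Real.norm_eq_abs, abs_of_pos hb]
    · rw [h2, norm_neg, norm_mul, norm_inv, norm_pow, Complex.norm_real,
        Real.norm_eq_abs, abs_of_pos ha]
      have : ‖(starRingEnd ℂ) z‖ = ‖z‖ := norm_star z
      rw [this, div_eq_mul_inv]
  -- norm of f
  have hnorm : ∀ z : ℂ, z ≠ 0 → f z = (((b + a/‖z‖^2 : ℝ)):ℂ) * z := by
    intro z hz
    have hz2 : ((‖z‖:ℝ):ℂ) ≠ 0 := Complex.ofReal_ne_zero.mpr (norm_ne_zero_iff.mpr hz)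
    have key : (starRingEnd ℂ) z * z = ((‖z‖:ℝ):ℂ)^2 := by
      rw [mul_comm, Complex.mul_conj]
      norm_cast
      rw [Complex.normSq_eq_norm_sq]
    have hcz : (starRingEnd ℂ) z ≠ 0 := by simpa using hz
    have h2 : (((‖z‖:ℝ):ℂ)^2) ≠ 0 := pow_ne_zero _ hz2
    have hinv : ((starRingEnd ℂ) z)⁻¹ = z * (((‖z‖:ℝ):ℂ)^2)⁻¹ := by
      apply inv_eq_of_mul_eq_one_right
      rw [← mul_assoc, key, mul_inv_cancel₀ h2]
    rw [hfeq z hz, hinv]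
    push_cast
    ring
  have harith : ∀ s : ℝ, s ≠ 0 → (b + a/s^2) * s = b*s + a/s := by
    intro s hs; field_simp
  have hnormval : ∀ z : ℂ, z ≠ 0 → ‖f z‖ = b * ‖z‖ + a / ‖z‖ := by
    intro z hz
    have hs0 : 0 < ‖z‖ := norm_pos_iff.mpr hz
    rw [hnorm z hz, norm_mul, Complex.norm_real, Real.norm_eq_abs,
      abs_of_pos (by positivity : (0:ℝ) < b + a/‖z‖^2)]
    exact harith ‖z‖ (ne_of_gt hs0)
  constructor
  · -- forward: positivity at z = r gives the inequality
    rintro ⟨-, hpos⟩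
    have hrnorm : ‖((r:ℝ):ℂ)‖ = r := by
      rw [Complex.norm_real, Real.norm_eq_abs, abs_of_pos hr0]
    have hz := hpos ((r:ℝ):ℂ) (by rw [hrnorm]) (by rw [hrnorm]; exact hr1.le)
    have hrne : ((r:ℝ):ℂ) ≠ 0 := Complex.ofReal_ne_zero.mpr (ne_of_gt hr0)
    obtain ⟨h1, h2⟩ := hW ((r:ℝ):ℂ) hrne
    rw [h1, h2, hrnorm] at hz
    have hlt : a < b * r^2 := by
      have h3 : 0 ≤ a / r^2 := by positivity
      have h4 : a / r^2 < b := by nlinarith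
      rw [div_lt_iff₀ (by positivity)] at h4
      linarith
    rw [lt_div_iff₀ (by positivity)]
    have haa : a * (1 - r^2) = r * (R - r) := by rw [ha_def]; field_simp
    have hbb : b * (1 - r^2) = 1 - r * R := by rw [hb_def]; field_simp
    nlinarith [mul_lt_mul_of_pos_right hlt h1r2]
  · -- reverse
    intro hcond
    rw [lt_div_iff₀ (by positivity)] at hcond
    have hlt : a < b * r^2 := by
      rw [ha_def, hb_def, div_mul_eq_mul_div, div_lt_div_iff₀ h1r2 h1r2]
      nlinarith [mul_pos h1r2 (mul_pos hr0 (by linarith : (0:ℝ) < 2*r - R*(1+r^2)))]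
    -- strict monotonicity of g s = b s + a/s on [r, ∞)
    have hstrict : ∀ s t : ℝ, r ≤ s → s < t → b*s + a/s < b*t + a/t := by
      intro s t hs hst
      have hs0 : 0 < s := lt_of_lt_of_le hr0 hs
      have ht0 : 0 < t := lt_trans hs0 hst
      have h1 : a/s - a/t = a*(t-s)/(s*t) := by field_simp
      have h2 : a*(t-s)/(s*t) < b*(t-s) := by
        rw [div_lt_iff₀ (by positivity)]
        have hst2 : r^2 ≤ s*t := by nlinarith
        have h5 : a < b*(s*t) := by nlinarith
        nlinarith [mul_pos (sub_pos.mpr hst) (sub_pos.mpr h5)]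
      linarith
    have hmono : ∀ s t : ℝ, r ≤ s → s ≤ t → b*s + a/s ≤ b*t + a/t := by
      intro s t hs hst
      rcases eq_or_lt_of_le hst with h | h
      · rw [h]
      · exact (hstrict s t hs h).le
    have hgr : b*r + a/r = R := by rw [ha_def, hb_def]; field_simp; ring
    have hg1 : b*1 + a/1 = 1 := by rw [ha_def, hb_def]; field_simp; ring
    have hne : ∀ z : ℂ, r ≤ ‖z‖ → z ≠ 0 := by
      intro z hz h0
      rw [h0, norm_zero] at hz; linarith
    constructor
    · refine ⟨?_, ?_, ?_⟩
      · -- MapsTo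
        rintro z ⟨hz1, hz2⟩
        have hz0 := hne z hz1
        constructor
        · rw [hnormval z hz0, ← hgr]
          exact hmono r ‖z‖ le_rfl hz1
        · rw [hnormval z hz0, ← hg1]
          exact hmono ‖z‖ 1 hz1 hz2
      · -- InjOn
        rintro z1 ⟨hz11, hz12⟩ z2 ⟨hz21, hz22⟩ hfz
        have h10 := hne z1 hz11
        have h20 := hne z2 hz21
        have hnn : b * ‖z1‖ + a / ‖z1‖ = b * ‖z2‖ + a / ‖z2‖ := by
          rw [← hnormval z1 h10, ← hnormval z2 h20, hfz]
        have hss : ‖z1‖ = ‖z2‖ := by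
          rcases lt_trichotomy ‖z1‖ ‖z2‖ with h | h | h
          · exact absurd hnn (ne_of_lt (hstrict _ _ hz11 h))
          · exact h
          · exact absurd hnn.symm (ne_of_lt (hstrict _ _ hz21 h))
        rw [hnorm z1 h10, hnorm z2 h20, hss] at hfz
        have hc0 : (((b + a/‖z2‖^2 : ℝ)):ℂ) ≠ 0 := by
          have hp : 0 < ‖z2‖ := norm_pos_iff.mpr h20
          exact Complex.ofReal_ne_zero.mpr (by positivity)
        exact mul_left_cancel₀ hc0 hfz
      · -- SurjOn
        rintro w ⟨hw1, hw2⟩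
        have hw0 : w ≠ 0 := by
          intro h0; rw [h0, norm_zero] at hw1; linarith
        have hcont : ContinuousOn (fun s : ℝ => b*s + a/s) (Set.Icc r 1) := by
          apply ContinuousOn.add (Continuous.continuousOn (continuous_const.mul continuous_id))
          exact ContinuousOn.div continuousOn_const continuousOn_id
            (fun x hx => ne_of_gt (lt_of_lt_of_le hr0 hx.1))
        have hmem : ‖w‖ ∈ Set.Icc (b*r + a/r) (b*1 + a/1) := by
          rw [hgr, hg1]; exact ⟨hw1, hw2⟩
        obtain ⟨s, hsmem, hgs⟩ := intermediate_value_Icc hr1.le hcont hmem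
        have hs0 : 0 < s := lt_of_lt_of_le hr0 hsmem.1
        have hwn : 0 < ‖w‖ := norm_pos_iff.mpr hw0
        refine ⟨(((s/‖w‖ : ℝ)):ℂ) * w, ?_, ?_⟩
        · have hzn : ‖(((s/‖w‖ : ℝ)):ℂ) * w‖ = s := by
            rw [norm_mul, Complex.norm_real, Real.norm_eq_abs,
              abs_of_pos (by positivity)]
            exact div_mul_cancel₀ s (ne_of_gt hwn)
          exact ⟨by rw [hzn]; exact hsmem.1, by rw [hzn]; exact hsmem.2⟩
        · have hz0 : (((s/‖w‖ : ℝ)):ℂ) * w ≠ 0 := by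
            apply mul_ne_zero _ hw0
            exact Complex.ofReal_ne_zero.mpr (by positivity)
          have hzn : ‖(((s/‖w‖ : ℝ)):ℂ) * w‖ = s := by
            rw [norm_mul, Complex.norm_real, Real.norm_eq_abs,
              abs_of_pos (by positivity)]
            exact div_mul_cancel₀ s (ne_of_gt hwn)
          rw [hnorm _ hz0, hzn]
          have hgs' : b*s + a/s = ‖w‖ := hgs
          have hscal : ((b + a/s^2) * (s/‖w‖) : ℝ) = 1 := by
            have hh : (b + a/s^2) * (s/‖w‖) = ((b + a/s^2) * s)/‖w‖ := by ring
            rw [hh, harith s (ne_of_gt hs0), hgs', div_self (ne_of_gt hwn)]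
          calc (((b + a/s^2 : ℝ)):ℂ) * ((((s/‖w‖ : ℝ)):ℂ) * w)
              = ((((b + a/s^2) * (s/‖w‖) : ℝ)):ℂ) * w := by push_cast; ring
            _ = w := by rw [hscal, Complex.ofReal_one, one_mul]
    · -- Jacobian positivity
      intro z hz1 hz2
      have hz0 := hne z hz1
      obtain ⟨h1, h2⟩ := hW z hz0
      rw [h1, h2]
      have hs0 : 0 < ‖z‖ := norm_pos_iff.mpr hz0
      have h5 : r^2 ≤ ‖z‖^2 := pow_le_pow_left₀ hr0.le hz1 2
      have h3 : a / ‖z‖^2 < b := by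
        rw [div_lt_iff₀ (by positivity)]
        exact lt_of_lt_of_le hlt (mul_le_mul_of_nonneg_left h5 hb.le)
      have h4 : 0 ≤ a / ‖z‖^2 := by positivity
      have h6 : 0 < (b - a/‖z‖^2) * (b + a/‖z‖^2) :=
        mul_pos (sub_pos.mpr h3) (by linarith)
      have h7 : (b - a/‖z‖^2) * (b + a/‖z‖^2) = b^2 - (a/‖z‖^2)^2 := by ring
      linarith
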